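/- Let (Z_j)_{j≥0} be i.i.d. ℝ^d-valued random vectors whose common characteristic function is θ ↦ exp(−∫_{S^{d−1}} |⟨θ, x⟩|^α Π(dx)) for some α ∈ (0,2) and finite symmetric measure Π on the unit sphere S^{d−1}, and let P ∈ ℝ^{d×d} with ρ(P) < 1. Then the a.s. convergent series Z := ∑_{j=0}^∞ P^j Z_j has characteristic function E[exp(i⟨θ, Z⟩)] = exp(−∫_{S^{d−1}} ∑_{j=0}^∞ |⟨(P^j)^⊤ θ, x⟩|^α Π(dx)) for all θ ∈ ℝ^d. -/

import Mathlib

set_option maxHeartbeats 1000000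
set_option synthInstance.maxHeartbeats 400000

open MeasureTheory ProbabilityTheory Matrix Filter Topology

/-- The spectral radius of a real `d × d` matrix: the supremum of the moduli of its complex
eigenvalues. -/
noncomputable def specRad {d : ℕ} (P : Matrix (Fin d) (Fin d) ℝ) : ℝ :=
  sSup ((fun z : ℂ => ‖z‖) '' spectrum ℂ (P.map (algebraMap ℝ ℂ)))

/-- A real `d × d` matrix acting on Euclidean space. -/
noncomputable def mApp {d : ℕ} (P : Matrix (Fin d) (Fin d) ℝ)
    (x : EuclideanSpace ℝ (Fin d)) : EuclideanSpace ℝ (Fin d) :=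
  Matrix.toEuclideanCLM (𝕜 := ℝ) P x

/-- `log⁺ x = max (log x) 0`. -/
noncomputable def logPlus (x : ℝ) : ℝ := max (Real.log x) 0

open scoped RealInnerProductSpace

/-! ### Auxiliary lemmas: spectral radius and geometric decay -/

section SpecRad
variable {d : ℕ}

lemma norm_mApp_le (Q : Matrix (Fin d) (Fin d) ℝ) (x : EuclideanSpace ℝ (Fin d)) :
    ‖mApp Q x‖ ≤ ‖Matrix.toEuclideanCLM (𝕜 := ℂ) (Q.map (algebraMap ℝ ℂ))‖ * ‖x‖ := by
  set A := Matrix.toEuclideanCLM (𝕜 := ℂ) (Q.map (algebraMap ℝ ℂ)) with hA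
  set y : EuclideanSpace ℂ (Fin d) := (WithLp.equiv 2 _).symm (fun i => (x i : ℂ)) with hy
  have hAy : A y = (WithLp.equiv 2 _).symm ((Q.map (algebraMap ℝ ℂ)) *ᵥ (fun i => (x i : ℂ))) :=
    Matrix.toEuclideanCLM_toLp _ _
  have hx : mApp Q x = (WithLp.equiv 2 _).symm (Q *ᵥ (fun i => x i)) :=
    Matrix.toEuclideanCLM_toLp (𝕜 := ℝ) Q (fun i => x i)
  have hnorm_eq : ‖mApp Q x‖ = ‖A y‖ := by
    rw [hx, hAy]
    rw [EuclideanSpace.norm_eq, EuclideanSpace.norm_eq]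
    congr 1
    refine Finset.sum_congr rfl fun i _ => ?_
    have : ((Q.map (algebraMap ℝ ℂ)) *ᵥ (fun i => (x i : ℂ))) i = ((Q *ᵥ (fun i => x i)) i : ℂ) := by
      simp only [Matrix.mulVec, dotProduct, Matrix.map_apply]
      push_cast
      rfl
    simp only [WithLp.equiv_symm_apply, PiLp.toLp_apply, this, Complex.norm_real]
  have hy_norm : ‖y‖ = ‖x‖ := by
    rw [EuclideanSpace.norm_eq, EuclideanSpace.norm_eq]
    congr 1
    refine Finset.sum_congr rfl fun i _ => ?_
    simp [hy, Complex.norm_real]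
  calc ‖mApp Q x‖ = ‖A y‖ := hnorm_eq
    _ ≤ ‖A‖ * ‖y‖ := A.le_opNorm y
    _ = ‖A‖ * ‖x‖ := by rw [hy_norm]

lemma specRad_geom {P : Matrix (Fin d) (Fin d) ℝ} (hP : specRad P < 1) :
    ∃ C r : ℝ, 0 < C ∧ 0 < r ∧ r < 1 ∧ ∀ (j : ℕ) (x : EuclideanSpace ℝ (Fin d)),
      ‖mApp (P ^ j) x‖ ≤ C * r ^ j * ‖x‖ := by
  set Pc := P.map (algebraMap ℝ ℂ) with hPc
  set A := Matrix.toEuclideanCLM (𝕜 := ℂ) Pc with hA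
  have hspec : spectrum ℂ A = spectrum ℂ Pc := AlgEquiv.spectrum_eq _ _
  have hbdd : ∀ k ∈ spectrum ℂ Pc, ‖k‖ ≤ specRad P := by
    intro k hk
    refine le_csSup ?_ ⟨k, hk, rfl⟩
    obtain ⟨R, hR⟩ := (Bornology.IsBounded.subset_closedBall (spectrum.isBounded (𝕜 := ℂ) A) 0)
    refine ⟨R, ?_⟩
    rintro - ⟨z, hz, rfl⟩
    simpa using mem_closedBall_zero_iff.mp (hR (hspec ▸ hz : z ∈ spectrum ℂ A))
  set r : ℝ := max ((specRad P + 1) / 2) (1 / 2) with hr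
  have hr0 : 0 < r := lt_of_lt_of_le (by norm_num) (le_max_right _ _)
  have hr1 : r < 1 := by
    apply max_lt _ (by norm_num)
    linarith
  have hsrlt : spectralRadius ℂ A < ENNReal.ofReal r := by
    have hle : spectralRadius ℂ A ≤ ENNReal.ofReal (specRad P) := by
      rw [spectralRadius]
      refine iSup₂_le fun k hk => ?_
      have := hbdd k (hspec ▸ hk)
      have h2 := ENNReal.ofReal_le_ofReal this
      rwa [ofReal_norm, enorm_eq_nnnorm] at h2
    refine lt_of_le_of_lt hle (ENNReal.ofReal_lt_ofReal_iff hr0 |>.mpr ?_)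
    calc specRad P ≤ max (specRad P) 0 := le_max_left _ _
      _ < r := by
        rcases le_or_gt (specRad P) 0 with h | h
        · simpa [max_eq_right h] using hr0
        · rw [max_eq_left h.le]
          calc specRad P < (specRad P + 1) / 2 := by linarith
            _ ≤ r := le_max_left _ _
  have hgel := spectrum.pow_norm_pow_one_div_tendsto_nhds_spectralRadius A
  have hev : ∀ᶠ n : ℕ in atTop, ENNReal.ofReal (‖A ^ n‖ ^ (1 / (n : ℝ))) < ENNReal.ofReal r :=
    hgel.eventually_lt_const hsrlt
  obtain ⟨N, hN⟩ := (hev.and (eventually_ge_atTop 1)).exists_forall_of_atTop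
  have hgeo : ∀ n, N ≤ n → ‖A ^ n‖ ≤ r ^ n := by
    intro n hn
    obtain ⟨h1, h2⟩ := hN n hn
    have hlt : ‖A ^ n‖ ^ (1 / (n : ℝ)) < r :=
      (ENNReal.ofReal_lt_ofReal_iff hr0).mp h1
    have hnpos : (0 : ℝ) < n := by exact_mod_cast h2
    have : (‖A ^ n‖ ^ (1 / (n : ℝ))) ^ (n : ℕ) ≤ r ^ n :=
      pow_le_pow_left₀ (Real.rpow_nonneg (norm_nonneg _) _) hlt.le n
    calc ‖A ^ n‖ = (‖A ^ n‖ ^ (1 / (n : ℝ))) ^ (n : ℕ) := by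
          rw [← Real.rpow_natCast (‖A ^ n‖ ^ (1 / (n : ℝ))) n, ← Real.rpow_mul (norm_nonneg _),
            one_div, inv_mul_cancel₀ (ne_of_gt hnpos), Real.rpow_one]
      _ ≤ r ^ n := this
  set C : ℝ := 1 + ∑ n ∈ Finset.range N, ‖A ^ n‖ / r ^ n with hC
  have hC1 : 1 ≤ C := by
    have h0 : 0 ≤ ∑ n ∈ Finset.range N, ‖A ^ n‖ / r ^ n :=
      Finset.sum_nonneg fun n _ => div_nonneg (norm_nonneg _) (pow_nonneg hr0.le n)
    rw [hC]
    linarith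
  have hCbound : ∀ n : ℕ, ‖A ^ n‖ ≤ C * r ^ n := by
    intro n
    rcases le_or_gt N n with h | h
    · calc ‖A ^ n‖ ≤ r ^ n := hgeo n h
        _ ≤ C * r ^ n := le_mul_of_one_le_left (pow_nonneg hr0.le n) hC1
    · have hmem : n ∈ Finset.range N := Finset.mem_range.mpr h
      have : ‖A ^ n‖ / r ^ n ≤ C := by
        have hle : ‖A ^ n‖ / r ^ n ≤ ∑ m ∈ Finset.range N, ‖A ^ m‖ / r ^ m :=
          Finset.single_le_sum (f := fun m => ‖A ^ m‖ / r ^ m)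
            (fun m _ => div_nonneg (norm_nonneg _) (pow_nonneg hr0.le m)) hmem
        rw [hC]
        linarith
      calc ‖A ^ n‖ = (‖A ^ n‖ / r ^ n) * r ^ n := by
            field_simp
        _ ≤ C * r ^ n := mul_le_mul_of_nonneg_right this (pow_nonneg hr0.le n)
  refine ⟨C, r, lt_of_lt_of_le one_pos hC1, hr0, hr1, fun j x => ?_⟩
  have hmap_pow : (P ^ j).map (algebraMap ℝ ℂ) = Pc ^ j := by
    simpa [RingHom.mapMatrix_apply, hPc] using map_pow (RingHom.mapMatrix (algebraMap ℝ ℂ)) P j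
  calc ‖mApp (P ^ j) x‖ ≤ ‖Matrix.toEuclideanCLM (𝕜 := ℂ) ((P ^ j).map (algebraMap ℝ ℂ))‖ * ‖x‖ :=
        norm_mApp_le _ x
    _ = ‖A ^ j‖ * ‖x‖ := by rw [hmap_pow, map_pow]
    _ ≤ (C * r ^ j) * ‖x‖ := mul_le_mul_of_nonneg_right (hCbound j) (norm_nonneg _)

lemma inner_mApp_transpose (Q : Matrix (Fin d) (Fin d) ℝ) (θ x : EuclideanSpace ℝ (Fin d)) :
    ⟪mApp Qᵀ θ, x⟫ = ⟪θ, mApp Q x⟫ := by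
  have h1 : mApp Qᵀ θ = (WithLp.equiv 2 _).symm (Qᵀ *ᵥ (fun i => θ i)) :=
    Matrix.toEuclideanCLM_toLp (𝕜 := ℝ) Qᵀ (fun i => θ i)
  have h2 : mApp Q x = (WithLp.equiv 2 _).symm (Q *ᵥ (fun i => x i)) :=
    Matrix.toEuclideanCLM_toLp (𝕜 := ℝ) Q (fun i => x i)
  rw [h1, h2]
  simp only [PiLp.inner_apply, RCLike.inner_apply, conj_trivial,
    WithLp.equiv_symm_apply, PiLp.toLp_apply]
  conv_lhs => arg 2; ext i; rw [mul_comm]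
  conv_rhs => arg 2; ext i; rw [mul_comm]
  calc ∑ i, (Qᵀ *ᵥ (fun i => θ i)) i * x i = (Qᵀ *ᵥ (fun i => θ i)) ⬝ᵥ (fun i => x i) := rfl
    _ = ((fun i => θ i) ᵥ* Q) ⬝ᵥ (fun i => x i) := by rw [Matrix.mulVec_transpose]
    _ = (fun i => θ i) ⬝ᵥ (Q *ᵥ (fun i => x i)) := (Matrix.dotProduct_mulVec _ Q _).symm
    _ = ∑ i, θ i * (Q *ᵥ (fun i => x i)) i := rfl

end SpecRad

/-! ### Auxiliary lemmas: integrability and complex products -/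

section Aux
variable {Ω : Type*} [MeasurableSpace Ω] {μ : Measure Ω} [IsProbabilityMeasure μ]

lemma integrable_of_bounded_meas {E : Type*} [NormedAddCommGroup E] [MeasurableSpace E]
    [BorelSpace E] [SecondCountableTopology E] {f : Ω → E} (hf : Measurable f) {C : ℝ}
    (hC : ∀ ω, ‖f ω‖ ≤ C) : Integrable f μ :=
  ⟨hf.aestronglyMeasurable, HasFiniteIntegral.of_bounded (ae_of_all _ hC)⟩

lemma integral_complex_re {f : Ω → ℂ} (hf : Integrable f μ) :
    (∫ ω, f ω ∂μ).re = ∫ ω, (f ω).re ∂μ := by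
  have := integral_re (f := f) hf
  simpa [RCLike.re_to_complex] using this.symm

lemma integral_complex_im {f : Ω → ℂ} (hf : Integrable f μ) :
    (∫ ω, f ω ∂μ).im = ∫ ω, (f ω).im ∂μ := by
  have := integral_im (f := f) hf
  simpa [RCLike.im_to_complex] using this.symm

lemma indep_integral_mul_complex {X Y : Ω → ℂ} (h : IndepFun X Y μ)
    (hXm : Measurable X) (hYm : Measurable Y)
    (hXb : ∀ ω, ‖X ω‖ ≤ 1) (hYb : ∀ ω, ‖Y ω‖ ≤ 1) :
    ∫ ω, X ω * Y ω ∂μ = (∫ ω, X ω ∂μ) * ∫ ω, Y ω ∂μ := by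
  have hre : ∀ {W : Ω → ℂ}, Measurable W → Measurable fun ω => (W ω).re :=
    fun hW => Complex.measurable_re.comp hW
  have him : ∀ {W : Ω → ℂ}, Measurable W → Measurable fun ω => (W ω).im :=
    fun hW => Complex.measurable_im.comp hW
  have hballre : ∀ {W : Ω → ℂ}, (∀ ω, ‖W ω‖ ≤ 1) → ∀ ω, ‖(W ω).re‖ ≤ 1 := by
    intro W hW ω
    exact le_trans (by simpa using Complex.abs_re_le_norm (W ω)) (hW ω)
  have hballim : ∀ {W : Ω → ℂ}, (∀ ω, ‖W ω‖ ≤ 1) → ∀ ω, ‖(W ω).im‖ ≤ 1 := by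
    intro W hW ω
    exact le_trans (by simpa using Complex.abs_im_le_norm (W ω)) (hW ω)
  have hXint : Integrable X μ := integrable_of_bounded_meas hXm hXb
  have hYint : Integrable Y μ := integrable_of_bounded_meas hYm hYb
  have hXYint : Integrable (fun ω => X ω * Y ω) μ :=
    integrable_of_bounded_meas (hXm.mul hYm)
      (fun ω => by rw [norm_mul]
                   exact mul_le_one₀ (hXb ω) (norm_nonneg _) (hYb ω))
  have iRR : IndepFun (fun ω => (X ω).re) (fun ω => (Y ω).re) μ :=
    h.comp Complex.measurable_re Complex.measurable_re
  have iRI : IndepFun (fun ω => (X ω).re) (fun ω => (Y ω).im) μ :=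
    h.comp Complex.measurable_re Complex.measurable_im
  have iIR : IndepFun (fun ω => (X ω).im) (fun ω => (Y ω).re) μ :=
    h.comp Complex.measurable_im Complex.measurable_re
  have iII : IndepFun (fun ω => (X ω).im) (fun ω => (Y ω).im) μ :=
    h.comp Complex.measurable_im Complex.measurable_im
  have intXr : Integrable (fun ω => (X ω).re) μ :=
    integrable_of_bounded_meas (hre hXm) (hballre hXb)
  have intXi : Integrable (fun ω => (X ω).im) μ :=
    integrable_of_bounded_meas (him hXm) (hballim hXb)
  have intYr : Integrable (fun ω => (Y ω).re) μ :=
    integrable_of_bounded_meas (hre hYm) (hballre hYb)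
  have intYi : Integrable (fun ω => (Y ω).im) μ :=
    integrable_of_bounded_meas (him hYm) (hballim hYb)
  have eRR : ∫ ω, (X ω).re * (Y ω).re ∂μ = (∫ ω, (X ω).re ∂μ) * ∫ ω, (Y ω).re ∂μ :=
    iRR.integral_fun_mul_eq_mul_integral intXr.aestronglyMeasurable intYr.aestronglyMeasurable
  have eRI : ∫ ω, (X ω).re * (Y ω).im ∂μ = (∫ ω, (X ω).re ∂μ) * ∫ ω, (Y ω).im ∂μ :=
    iRI.integral_fun_mul_eq_mul_integral intXr.aestronglyMeasurable intYi.aestronglyMeasurable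
  have eIR : ∫ ω, (X ω).im * (Y ω).re ∂μ = (∫ ω, (X ω).im ∂μ) * ∫ ω, (Y ω).re ∂μ :=
    iIR.integral_fun_mul_eq_mul_integral intXi.aestronglyMeasurable intYr.aestronglyMeasurable
  have eII : ∫ ω, (X ω).im * (Y ω).im ∂μ = (∫ ω, (X ω).im ∂μ) * ∫ ω, (Y ω).im ∂μ :=
    iII.integral_fun_mul_eq_mul_integral intXi.aestronglyMeasurable intYi.aestronglyMeasurable
  have A : Integrable (fun ω => (X ω).re * (Y ω).re) μ := iRR.integrable_mul intXr intYr
  have B : Integrable (fun ω => (X ω).im * (Y ω).im) μ := iII.integrable_mul intXi intYi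
  have A' : Integrable (fun ω => (X ω).re * (Y ω).im) μ := iRI.integrable_mul intXr intYi
  have B' : Integrable (fun ω => (X ω).im * (Y ω).re) μ := iIR.integrable_mul intXi intYr
  apply Complex.ext
  · have h1 : (∫ ω, X ω * Y ω ∂μ).re =
        ∫ ω, ((X ω).re * (Y ω).re - (X ω).im * (Y ω).im) ∂μ := by
      rw [integral_complex_re hXYint]
      exact integral_congr_ae (ae_of_all _ fun ω => by simp [Complex.mul_re])
    rw [h1, integral_sub A B, eRR, eII, Complex.mul_re,
      integral_complex_re hXint, integral_complex_re hYint,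
      integral_complex_im hXint, integral_complex_im hYint]
  · have h1 : (∫ ω, X ω * Y ω ∂μ).im =
        ∫ ω, ((X ω).re * (Y ω).im + (X ω).im * (Y ω).re) ∂μ := by
      rw [integral_complex_im hXYint]
      exact integral_congr_ae (ae_of_all _ fun ω => by simp [Complex.mul_im])
    rw [h1, integral_add A' B', eRI, eIR, Complex.mul_im,
      integral_complex_re hXint, integral_complex_re hYint,
      integral_complex_im hXint, integral_complex_im hYint]

lemma integral_prod_range {f : ℕ → Ω → ℂ}
    (hindep : iIndepFun f μ) (hmeas : ∀ j, Measurable (f j))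
    (hb : ∀ j ω, ‖f j ω‖ ≤ 1) (n : ℕ) :
    ∫ ω, ∏ j ∈ Finset.range n, f j ω ∂μ = ∏ j ∈ Finset.range n, ∫ ω, f j ω ∂μ := by
  induction n with
  | zero => simp
  | succ n ih =>
    have hprodmeas : Measurable fun ω => ∏ j ∈ Finset.range n, f j ω :=
      Finset.measurable_prod _ fun j _ => hmeas j
    have hprodb : ∀ ω, ‖∏ j ∈ Finset.range n, f j ω‖ ≤ 1 := by
      intro ω
      calc ‖∏ j ∈ Finset.range n, f j ω‖ = ∏ j ∈ Finset.range n, ‖f j ω‖ := norm_prod _ _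
        _ ≤ ∏ j ∈ Finset.range n, 1 := Finset.prod_le_prod (fun j _ => norm_nonneg _)
            (fun j _ => hb j ω)
        _ = 1 := Finset.prod_const_one
    have hidf : IndepFun (∏ j ∈ Finset.range n, f j) (f n) μ :=
      hindep.indepFun_prod_range_succ hmeas n
    have hidf' : IndepFun (fun ω => ∏ j ∈ Finset.range n, f j ω) (f n) μ := by
      have : (∏ j ∈ Finset.range n, f j) = fun ω => ∏ j ∈ Finset.range n, f j ω := by
        funext ω; simp [Finset.prod_apply]
      rwa [this] at hidf
    simp only [Finset.prod_range_succ]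
    rw [← ih]
    exact indep_integral_mul_complex hidf' hprodmeas (hmeas n) hprodb (hb n)

/-! ### The truncation tail bound -/

lemma sin_div_le_of_ne {x u : ℝ} (hu : 0 < u) (hx : x ≠ 0) :
    Real.sin (u * x) / x ≤ u := by
  have h1 : Real.sin (u * x) / x ≤ |Real.sin (u * x)| / |x| := by
    rw [← abs_div]; exact le_abs_self _
  have h2 : |Real.sin (u * x)| ≤ |u * x| := Real.abs_sin_le_abs
  calc Real.sin (u * x) / x ≤ |Real.sin (u * x)| / |x| := h1
    _ ≤ |u * x| / |x| := by gcongr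
    _ = u := by rw [abs_mul, abs_of_pos hu, mul_div_assoc, div_self (abs_ne_zero.mpr hx), mul_one]

lemma tail_bound (μ : Measure Ω) [IsProbabilityMeasure μ]
    {X : Ω → ℝ} (hX : Measurable X) {α c : ℝ} (hα : 0 < α) (hc : 0 ≤ c)
    (hchar : ∀ t : ℝ, ∫ ω, Real.cos (t * X ω) ∂μ = Real.exp (-(c * |t| ^ α)))
    {u : ℝ} (hu : 0 < u) :
    (μ {ω | 2 / u ≤ |X ω|}).toReal ≤ 2 * c * u ^ α := by
  set s : Set Ω := {ω | 2 / u ≤ |X ω|} with hs_def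
  have hs : MeasurableSet s := measurableSet_le measurable_const hX.abs
  have hint_t : ∀ x : ℝ, (∫ t in Set.Ioc (0:ℝ) u, (1 - Real.cos (t * x))) =
      if x = 0 then 0 else u - Real.sin (u * x) / x := by
    intro x
    rw [← intervalIntegral.integral_of_le hu.le]
    have hcos : IntervalIntegrable (fun t => Real.cos (t * x)) volume 0 u :=
      ((Real.continuous_cos.comp (continuous_id.mul continuous_const))).intervalIntegrable 0 u
    rw [intervalIntegral.integral_sub (intervalIntegrable_const) hcos,
      intervalIntegral.integral_const]
    by_cases hx : x = 0
    · simp [hx]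
    · rw [intervalIntegral.integral_comp_mul_right Real.cos hx, integral_cos]
      simp only [zero_mul, Real.sin_zero, sub_zero, smul_eq_mul, mul_one, if_neg hx]
      field_simp
  set g : Ω → ℝ := fun ω => if X ω = 0 then 0 else u - Real.sin (u * X ω) / X ω with hg_def
  have hgmeas : Measurable g := by
    refine Measurable.ite (hX (measurableSet_singleton 0)) measurable_const ?_
    exact measurable_const.sub (((Real.measurable_sin.comp ((hX.const_mul u)))).div hX)
  have hg_nonneg : ∀ ω, 0 ≤ g ω := by
    intro ω
    by_cases hx : X ω = 0
    · simp [hg_def, hx]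
    · simp only [hg_def, if_neg hx]
      have := sin_div_le_of_ne hu hx
      linarith
  have hg_le : ∀ ω, g ω ≤ 2 * u := by
    intro ω
    by_cases hx : X ω = 0
    · simp [hg_def, hx]; positivity
    · simp only [hg_def, if_neg hx]
      have h1 : -(Real.sin (u * X ω)) / X ω ≤ u := by
        have := sin_div_le_of_ne hu (x := X ω) hx
        have h2 : Real.sin (u * X ω) / X ω ≥ -u := by
          have h3 : |Real.sin (u * X ω) / X ω| ≤ u := by
            rw [abs_div]
            rw [div_le_iff₀ (abs_pos.mpr hx)]
            calc |Real.sin (u * X ω)| ≤ |u * X ω| := Real.abs_sin_le_abs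
              _ = u * |X ω| := by rw [abs_mul, abs_of_pos hu]
          linarith [neg_abs_le (Real.sin (u * X ω) / X ω)]
        linarith [neg_div (X ω) (Real.sin (u * X ω))]
      have h2 : -u ≤ Real.sin (u * X ω) / X ω := by
        have := neg_div (X ω) (Real.sin (u * X ω))
        linarith [h1]
      linarith
  have key : ∀ ω, s.indicator (fun _ => u / 2) ω ≤ g ω := by
    intro ω
    by_cases hω : ω ∈ s
    · rw [Set.indicator_of_mem hω]
      have hx0 : X ω ≠ 0 := by
        intro h
        have hxl : 2 / u ≤ |X ω| := hω
        rw [h, abs_zero] at hxl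
        have : (0:ℝ) < 2/u := by positivity
        linarith
      simp only [hg_def, if_neg hx0]
      have hxl : 2 / u ≤ |X ω| := hω
      have h1 : Real.sin (u * X ω) / X ω ≤ |Real.sin (u * X ω)| / |X ω| := by
        rw [← abs_div]; exact le_abs_self _
      have h2 : |Real.sin (u * X ω)| / |X ω| ≤ 1 / |X ω| :=
        (div_le_div_iff_of_pos_right (abs_pos.mpr hx0)).mpr (Real.abs_sin_le_one _)
      have h4 : 2 ≤ u * |X ω| := by
        rw [div_le_iff₀ hu] at hxl
        nlinarith [mul_comm u (|X ω|)]
      have h3 : 1 / |X ω| ≤ u / 2 := by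
        rw [div_le_div_iff₀ (abs_pos.mpr hx0) (by norm_num : (0:ℝ) < 2)]
        nlinarith [h4]
      linarith
    · rw [Set.indicator_of_notMem hω]
      exact hg_nonneg ω
  have hgint : Integrable g μ :=
    ⟨hgmeas.aestronglyMeasurable, HasFiniteIntegral.of_bounded (C := 2 * u)
      (ae_of_all _ fun ω => by rw [Real.norm_eq_abs, abs_of_nonneg (hg_nonneg ω)]; exact hg_le ω)⟩
  have hlow : (u / 2) * (μ s).toReal ≤ ∫ ω, g ω ∂μ := by
    have h1 : ∫ ω, s.indicator (fun _ => u / 2) ω ∂μ = (μ s).toReal • (u / 2) := by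
      rw [integral_indicator_const _ hs]
      rfl
    have h2 : ∫ ω, s.indicator (fun _ => u / 2) ω ∂μ ≤ ∫ ω, g ω ∂μ :=
      integral_mono ((integrable_const (u/2)).indicator hs) hgint key
    rw [h1] at h2
    rw [smul_eq_mul] at h2
    linarith
  have finRestrict : IsFiniteMeasure (volume.restrict (Set.Ioc (0:ℝ) u)) := by
    constructor
    rw [Measure.restrict_apply_univ, Real.volume_Ioc]
    exact ENNReal.ofReal_lt_top
  have hprodInt : Integrable (Function.uncurry fun (ω : Ω) (t : ℝ) => 1 - Real.cos (t * X ω))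
      (μ.prod (volume.restrict (Set.Ioc (0:ℝ) u))) := by
    have hmeas : Measurable (Function.uncurry fun (ω : Ω) (t : ℝ) => 1 - Real.cos (t * X ω)) := by
      apply measurable_const.sub
      exact (measurable_snd.mul (hX.comp measurable_fst)).cos
    refine ⟨hmeas.aestronglyMeasurable, HasFiniteIntegral.of_bounded (C := 2) (ae_of_all _ ?_)⟩
    rintro ⟨ω, t⟩
    rw [Real.norm_eq_abs]
    have := Real.neg_one_le_cos (t * X ω)
    have := Real.cos_le_one (t * X ω)
    rw [abs_le]
    constructor <;> simp [Function.uncurry] <;> linarith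
  have hswap : ∫ ω, (∫ t in Set.Ioc (0:ℝ) u, (1 - Real.cos (t * X ω))) ∂μ =
      ∫ t in Set.Ioc (0:ℝ) u, (∫ ω, (1 - Real.cos (t * X ω)) ∂μ) :=
    integral_integral_swap hprodInt
  have hinner : ∀ t : ℝ, ∫ ω, (1 - Real.cos (t * X ω)) ∂μ = 1 - Real.exp (-(c * |t| ^ α)) := by
    intro t
    have hcosint : Integrable (fun ω => Real.cos (t * X ω)) μ :=
      ⟨((hX.const_mul t).cos).aestronglyMeasurable, HasFiniteIntegral.of_bounded (C := 1)
        (ae_of_all _ fun ω => by rw [Real.norm_eq_abs]; exact Real.abs_cos_le_one _)⟩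
    rw [integral_sub (integrable_const 1) hcosint, integral_const, hchar t]
    simp
  have hup : ∫ t in Set.Ioc (0:ℝ) u, (1 - Real.exp (-(c * |t| ^ α))) ≤ (c * u ^ α) * u := by
    have hcont : Continuous fun t : ℝ => 1 - Real.exp (-(c * |t| ^ α)) := by
      apply continuous_const.sub
      apply Real.continuous_exp.comp
      apply Continuous.neg
      apply continuous_const.mul
      exact continuous_abs.rpow_const (fun x => Or.inr hα.le)
    have hfint : IntegrableOn (fun t : ℝ => 1 - Real.exp (-(c * |t| ^ α))) (Set.Ioc 0 u) := by
      refine ⟨hcont.measurable.aestronglyMeasurable, HasFiniteIntegral.of_bounded (C := 1)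
        (ae_of_all _ fun t => ?_)⟩
      rw [Real.norm_eq_abs, abs_le]
      have h1 : (0:ℝ) < Real.exp (-(c * |t| ^ α)) := Real.exp_pos _
      have h2 : Real.exp (-(c * |t| ^ α)) ≤ 1 := by
        rw [Real.exp_le_one_iff]
        have : (0:ℝ) ≤ c * |t| ^ α := mul_nonneg hc (Real.rpow_nonneg (abs_nonneg _) _)
        linarith
      constructor <;> linarith
    have hmono : ∀ t ∈ Set.Ioc (0:ℝ) u, 1 - Real.exp (-(c * |t| ^ α)) ≤ c * u ^ α := by
      rintro t ⟨ht0, htu⟩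
      have h1 : 1 - Real.exp (-(c * |t| ^ α)) ≤ c * |t| ^ α := by
        have := Real.add_one_le_exp (-(c * |t| ^ α))
        linarith
      have h2 : |t| ^ α ≤ u ^ α := by
        apply Real.rpow_le_rpow (abs_nonneg _) _ hα.le
        rw [abs_of_pos ht0]; exact htu
      calc 1 - Real.exp (-(c * |t| ^ α)) ≤ c * |t| ^ α := h1
        _ ≤ c * u ^ α := by gcongr
    calc ∫ t in Set.Ioc (0:ℝ) u, (1 - Real.exp (-(c * |t| ^ α)))
        ≤ ∫ _t in Set.Ioc (0:ℝ) u, (c * u ^ α) :=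
          setIntegral_mono_on hfint ((integrableOn_const_iff).mpr (Or.inr (by
            rw [Real.volume_Ioc]; exact ENNReal.ofReal_lt_top))) measurableSet_Ioc hmono
      _ = (volume (Set.Ioc (0:ℝ) u)).toReal • (c * u ^ α) := setIntegral_const _
      _ = (c * u ^ α) * u := by
          rw [Real.volume_Ioc, ENNReal.toReal_ofReal (by linarith), smul_eq_mul]
          ring
  have hJ : ∫ ω, g ω ∂μ ≤ (c * u ^ α) * u := by
    have h1 : ∫ ω, g ω ∂μ = ∫ ω, (∫ t in Set.Ioc (0:ℝ) u, (1 - Real.cos (t * X ω))) ∂μ := by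
      apply integral_congr_ae
      exact ae_of_all _ fun ω => (hint_t (X ω)).symm
    rw [h1, hswap]
    calc ∫ t in Set.Ioc (0:ℝ) u, (∫ ω, (1 - Real.cos (t * X ω)) ∂μ)
        = ∫ t in Set.Ioc (0:ℝ) u, (1 - Real.exp (-(c * |t| ^ α))) :=
          integral_congr_ae (ae_of_all _ fun t => hinner t)
      _ ≤ (c * u ^ α) * u := hup
  have hfinal : (u / 2) * (μ s).toReal ≤ (c * u ^ α) * u := le_trans hlow hJ
  have hmu : (μ s).toReal * u ≤ (2 * c * u ^ α) * u := by nlinarith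
  exact le_of_mul_le_mul_right hmu hu

end Aux

/-! ### Small helpers for the main theorem -/

section Helpers
variable {d : ℕ}

lemma measurable_cexp_inner (v : EuclideanSpace ℝ (Fin d)) :
    Measurable fun x : EuclideanSpace ℝ (Fin d) =>
      Complex.exp (Complex.I * (⟪v, x⟫ : ℝ)) := by
  apply Continuous.measurable
  exact Complex.continuous_exp.comp (continuous_const.mul
    (Complex.continuous_ofReal.comp (continuous_const.inner continuous_id)))

lemma norm_cexp_I_mul (y : ℝ) : ‖Complex.exp (Complex.I * (y : ℝ))‖ = 1 := by
  rw [mul_comm, Complex.norm_exp_ofReal_mul_I]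

end Helpers

theorem charFun_series_symmetric_stable {d : ℕ} {Ω : Type*} [MeasurableSpace Ω]
    (μ : Measure Ω) [IsProbabilityMeasure μ]
    (Z : ℕ → Ω → EuclideanSpace ℝ (Fin d)) (hmeas : ∀ j, Measurable (Z j))
    (hindep : iIndepFun Z μ)
    (hident : ∀ j, IdentDistrib (Z j) (Z 0) μ μ)
    (α : ℝ) (hα0 : 0 < α) (hα2 : α < 2)
    (Pi0 : Measure (EuclideanSpace ℝ (Fin d))) [IsFiniteMeasure Pi0]
    (hsphere : Pi0 (Metric.sphere (0 : EuclideanSpace ℝ (Fin d)) 1)ᶜ = 0)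
    (hsymm : Measure.map (fun x => -x) Pi0 = Pi0)
    (hstable : ∀ θ : EuclideanSpace ℝ (Fin d),
      ∫ ω, Complex.exp (Complex.I * (⟪θ, Z 0 ω⟫ : ℝ)) ∂μ =
        Complex.exp (-((∫ x, |⟪θ, x⟫| ^ α ∂Pi0 : ℝ) : ℂ)))
    (P : Matrix (Fin d) (Fin d) ℝ) (hP : specRad P < 1) :
    (∀ᵐ ω ∂μ, Summable fun j : ℕ => mApp (P ^ j) (Z j ω)) ∧
    ∀ θ : EuclideanSpace ℝ (Fin d),
      ∫ ω, Complex.exp (Complex.I * (⟪θ, ∑' j : ℕ, mApp (P ^ j) (Z j ω)⟫ : ℝ)) ∂μ =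
        Complex.exp
          (-((∫ x, ∑' j : ℕ, |⟪mApp (P ^ j)ᵀ θ, x⟫| ^ α ∂Pi0 : ℝ) : ℂ)) := by
  classical
  obtain ⟨C, r, hCpos, hr0, hr1, hgeo⟩ := specRad_geom hP
  set cc : EuclideanSpace ℝ (Fin d) → ℝ := fun v => ∫ x, |⟪v, x⟫| ^ α ∂Pi0 with hcc_def
  have hsphere_ae : ∀ᵐ x ∂Pi0, ‖x‖ = 1 := by
    have h1 : ∀ᵐ x ∂Pi0, x ∈ Metric.sphere (0 : EuclideanSpace ℝ (Fin d)) 1 :=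
      mem_ae_iff.mpr hsphere
    filter_upwards [h1] with x hx
    simpa using mem_sphere_zero_iff_norm.mp hx
  have hinner_cont : ∀ v : EuclideanSpace ℝ (Fin d),
      Continuous fun x : EuclideanSpace ℝ (Fin d) => |⟪v, x⟫| ^ α := fun v =>
    (continuous_const.inner continuous_id).abs.rpow_const (fun x => Or.inr hα0.le)
  have hccint : ∀ v : EuclideanSpace ℝ (Fin d), Integrable (fun x => |⟪v, x⟫| ^ α) Pi0 := by
    intro v
    refine ⟨(hinner_cont v).measurable.aestronglyMeasurable,
      HasFiniteIntegral.of_bounded (C := ‖v‖ ^ α) ?_⟩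
    filter_upwards [hsphere_ae] with x hx
    rw [Real.norm_eq_abs, abs_of_nonneg (Real.rpow_nonneg (abs_nonneg _) _)]
    apply Real.rpow_le_rpow (abs_nonneg _) _ hα0.le
    calc |⟪v, x⟫| ≤ ‖v‖ * ‖x‖ := abs_real_inner_le_norm v x
      _ = ‖v‖ := by rw [hx, mul_one]
  have hcc_nonneg : ∀ v, 0 ≤ cc v :=
    fun v => integral_nonneg fun x => Real.rpow_nonneg (abs_nonneg _) _
  have hcc_bound : ∀ (v : EuclideanSpace ℝ (Fin d)) (K : ℝ), 0 ≤ K →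
      (∀ x : EuclideanSpace ℝ (Fin d), ‖x‖ = 1 → |⟪v, x⟫| ≤ K) →
      cc v ≤ K ^ α * (Pi0 Set.univ).toReal := by
    intro v K hK hvK
    have h1 : cc v ≤ ∫ _x, K ^ α ∂Pi0 := by
      apply integral_mono_ae (hccint v) (integrable_const _)
      filter_upwards [hsphere_ae] with x hx
      exact Real.rpow_le_rpow (abs_nonneg _) (hvK x hx) hα0.le
    rw [integral_const, smul_eq_mul, mul_comm] at h1
    exact h1
  -- characteristic function of each Z j
  have hcharZ : ∀ (j : ℕ) (v : EuclideanSpace ℝ (Fin d)),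
      ∫ ω, Complex.exp (Complex.I * (⟪v, Z j ω⟫ : ℝ)) ∂μ = Complex.exp (-(cc v : ℂ)) := by
    intro j v
    have hg : Measurable fun x : EuclideanSpace ℝ (Fin d) =>
        Complex.exp (Complex.I * (⟪v, x⟫ : ℝ)) := measurable_cexp_inner v
    have hid := (hident j).comp hg
    have h1 : ∫ ω, Complex.exp (Complex.I * (⟪v, Z j ω⟫ : ℝ)) ∂μ =
        ∫ ω, Complex.exp (Complex.I * (⟪v, Z 0 ω⟫ : ℝ)) ∂μ := hid.integral_eq
    rw [h1, hstable v]
  -- cosine transform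
  have hcharRe : ∀ (v : EuclideanSpace ℝ (Fin d)) (t : ℝ),
      ∫ ω, Real.cos (t * ⟪v, Z 0 ω⟫) ∂μ = Real.exp (-(cc v * |t| ^ α)) := by
    intro v t
    have h1 := hstable (t • v)
    have hscale : cc (t • v) = |t| ^ α * cc v := by
      calc cc (t • v) = ∫ x, |t| ^ α * |⟪v, x⟫| ^ α ∂Pi0 := by
            apply integral_congr_ae
            refine ae_of_all _ fun x => ?_
            show |⟪t • v, x⟫| ^ α = |t| ^ α * |⟪v, x⟫| ^ α
            rw [real_inner_smul_left, abs_mul, Real.mul_rpow (abs_nonneg _) (abs_nonneg _)]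
        _ = |t| ^ α * cc v := integral_const_mul _ _
    have hexpint : Integrable (fun ω => Complex.exp (Complex.I * (⟪t • v, Z 0 ω⟫ : ℝ))) μ :=
      integrable_of_bounded_meas ((measurable_cexp_inner (t • v)).comp (hmeas 0))
        (fun ω => (norm_cexp_I_mul _).le)
    calc ∫ ω, Real.cos (t * ⟪v, Z 0 ω⟫) ∂μ
        = ∫ ω, (Complex.exp (Complex.I * (⟪t • v, Z 0 ω⟫ : ℝ))).re ∂μ := by
          apply integral_congr_ae
          refine ae_of_all _ fun ω => ?_
          show Real.cos (t * ⟪v, Z 0 ω⟫) = (Complex.exp (Complex.I * (⟪t • v, Z 0 ω⟫ : ℝ))).re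
          rw [real_inner_smul_left, mul_comm Complex.I, Complex.exp_ofReal_mul_I_re]
      _ = (∫ ω, Complex.exp (Complex.I * (⟪t • v, Z 0 ω⟫ : ℝ)) ∂μ).re :=
          (integral_complex_re hexpint).symm
      _ = (Complex.exp (-(cc (t • v) : ℂ))).re := by rw [h1]
      _ = Real.exp (-(cc v * |t| ^ α)) := by
          rw [hscale]
          rw [show (-((|t| ^ α * cc v : ℝ) : ℂ)) = ((-(cc v * |t| ^ α) : ℝ) : ℂ) by
            push_cast; ring]
          exact Complex.exp_ofReal_re _
  -- First conjunct: a.s. summability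
  have hsum : ∀ᵐ ω ∂μ, Summable fun j : ℕ => mApp (P ^ j) (Z j ω) := by
    rcases Nat.eq_zero_or_pos d with hd | hd
    · refine Filter.Eventually.of_forall fun ω => ?_
      have hz : ∀ j, mApp (P ^ j) (Z j ω) = (0 : EuclideanSpace ℝ (Fin d)) := by
        intro j
        ext i
        exact absurd i.isLt (by omega)
      simpa [funext hz] using (summable_zero : Summable fun _ : ℕ => (0 : EuclideanSpace ℝ (Fin d)))
    · set b := Real.sqrt r with hb_def
      have hb0 : 0 < b := Real.sqrt_pos.mpr hr0
      have hb1 : b < 1 := by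
        rw [hb_def, show (1:ℝ) = Real.sqrt 1 by rw [Real.sqrt_one]]
        exact Real.sqrt_lt_sqrt hr0.le hr1
      have hbr : b * b = r := Real.mul_self_sqrt hr0.le
      set Ei : Fin d → EuclideanSpace ℝ (Fin d) := fun i => EuclideanSpace.single i (1 : ℝ)
        with hEi
      set sd := Real.sqrt d with hsd_def
      have hsd : 0 < sd := Real.sqrt_pos.mpr (by exact_mod_cast hd)
      have hsd2 : sd * sd = d := Real.mul_self_sqrt (Nat.cast_nonneg d)
      -- tail bound for ‖Z 0‖
      set K : ℝ := ∑ i : Fin d, 2 * cc (Ei i) * (2 * sd) ^ α with hK_def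
      have hK0 : 0 ≤ K := Finset.sum_nonneg fun i _ => by
        have := hcc_nonneg (Ei i)
        positivity
      have htail : ∀ t : ℝ, 0 < t →
          (μ {ω | t ≤ ‖Z 0 ω‖}).toReal ≤ K * (1 / t) ^ α := by
        intro t ht
        set u := 2 * sd / t with hu_def
        have hu : 0 < u := by positivity
        have hXm : ∀ i : Fin d, Measurable fun ω => ⟪Ei i, Z 0 ω⟫ := fun i =>
          ((continuous_const.inner continuous_id).measurable).comp (hmeas 0)
        have hti : ∀ i : Fin d,
            (μ {ω | 2 / u ≤ |⟪Ei i, Z 0 ω⟫|}).toReal ≤ 2 * cc (Ei i) * u ^ α := fun i =>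
          tail_bound μ (hXm i) hα0 (hcc_nonneg _) (hcharRe (Ei i)) hu
        have h2u : 2 / u = t / sd := by
          rw [hu_def]; field_simp
        have hincl : {ω | t ≤ ‖Z 0 ω‖} ⊆
            ⋃ i : Fin d, {ω | 2 / u ≤ |⟪Ei i, Z 0 ω⟫|} := by
          intro ω hω
          by_contra hcon
          simp only [Set.mem_iUnion, Set.mem_setOf_eq, not_exists, not_le] at hcon
          have hlt : ∀ i : Fin d, |(Z 0 ω) i| < t / sd := by
            intro i
            have := hcon i
            rwa [h2u, hEi, EuclideanSpace.inner_single_left, conj_trivial, one_mul] at this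
          haveI : Nonempty (Fin d) := ⟨⟨0, hd⟩⟩
          have hns : ‖Z 0 ω‖ ^ 2 < t ^ 2 := by
            have h1 : ‖Z 0 ω‖ ^ 2 = ∑ i : Fin d, |(Z 0 ω) i| ^ 2 := by
              rw [EuclideanSpace.norm_eq, Real.sq_sqrt
                (Finset.sum_nonneg fun i _ => sq_nonneg _)]
              exact Finset.sum_congr rfl fun i _ => by rw [Real.norm_eq_abs]
            rw [h1]
            calc ∑ i : Fin d, |(Z 0 ω) i| ^ 2 < ∑ _i : Fin d, (t / sd) ^ 2 := by
                  apply Finset.sum_lt_sum_of_nonempty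
                  · exact Finset.univ_nonempty (α := Fin d)
                  · intro i _
                    exact pow_lt_pow_left₀ (hlt i) (abs_nonneg _) two_ne_zero
              _ = d * (t / sd) ^ 2 := by
                  rw [Finset.sum_const, Finset.card_univ, Fintype.card_fin, nsmul_eq_mul]
              _ = t ^ 2 := by
                  rw [div_pow]
                  rw [show sd ^ 2 = (d : ℝ) by rw [sq]; exact hsd2]
                  field_simp
          have : ‖Z 0 ω‖ < t := by
            have := lt_of_pow_lt_pow_left₀ 2 ht.le hns
            exact this
          exact absurd hω (by simp only [Set.mem_setOf_eq]; linarith)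
        have hsum_ne : (∑ i : Fin d, μ {ω | 2 / u ≤ |⟪Ei i, Z 0 ω⟫|}) ≠ ⊤ :=
          (ENNReal.sum_lt_top.mpr fun i _ => measure_lt_top μ _).ne
        calc (μ {ω | t ≤ ‖Z 0 ω‖}).toReal
            ≤ (∑ i : Fin d, μ {ω | 2 / u ≤ |⟪Ei i, Z 0 ω⟫|}).toReal := by
              apply ENNReal.toReal_mono hsum_ne
              exact le_trans (measure_mono hincl) (measure_iUnion_fintype_le μ _)
          _ = ∑ i : Fin d, (μ {ω | 2 / u ≤ |⟪Ei i, Z 0 ω⟫|}).toReal :=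
              ENNReal.toReal_sum fun i _ => measure_ne_top μ _
          _ ≤ ∑ i : Fin d, 2 * cc (Ei i) * u ^ α := Finset.sum_le_sum fun i _ => hti i
          _ = K * (1 / t) ^ α := by
              rw [hK_def, Finset.sum_mul]
              refine Finset.sum_congr rfl fun i _ => ?_
              have hU : u ^ α = (2 * sd) ^ α * (1 / t) ^ α := by
                rw [← Real.mul_rpow (by positivity) (by positivity)]
                congr 1
                rw [hu_def]; field_simp
              rw [hU]; ring
      -- Borel–Cantelli
      set sset : ℕ → Set Ω := fun j => {ω | (b⁻¹) ^ j ≤ ‖Z j ω‖} with hsset_def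
      have htj_pos : ∀ j : ℕ, (0:ℝ) < (b⁻¹) ^ j := fun j => pow_pos (by positivity) j
      have hmapj : ∀ j, μ (sset j) = μ {ω | (b⁻¹) ^ j ≤ ‖Z 0 ω‖} := by
        intro j
        have hid : IdentDistrib (fun ω => ‖Z j ω‖) (fun ω => ‖Z 0 ω‖) μ μ :=
          (hident j).comp measurable_norm
        have e1 : sset j = (fun ω => ‖Z j ω‖) ⁻¹' (Set.Ici ((b⁻¹) ^ j)) := rfl
        have e2 : {ω | (b⁻¹) ^ j ≤ ‖Z 0 ω‖} = (fun ω => ‖Z 0 ω‖) ⁻¹' (Set.Ici ((b⁻¹) ^ j)) := rfl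
        have hmj : Measurable fun ω => ‖Z j ω‖ := measurable_norm.comp (hmeas j)
        have hm0 : Measurable fun ω => ‖Z 0 ω‖ := measurable_norm.comp (hmeas 0)
        rw [e1, e2, ← Measure.map_apply hmj measurableSet_Ici,
          ← Measure.map_apply hm0 measurableSet_Ici]
        congr 1
        exact hid.map_eq
      have hjbound : ∀ j, (μ (sset j)).toReal ≤ K * (b ^ α) ^ j := by
        intro j
        rw [hmapj j]
        calc (μ {ω | (b⁻¹) ^ j ≤ ‖Z 0 ω‖}).toReal ≤ K * (1 / (b⁻¹) ^ j) ^ α :=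
              htail _ (htj_pos j)
          _ = K * (b ^ α) ^ j := by
              congr 1
              rw [one_div, ← inv_pow, inv_inv]
              rw [← Real.rpow_natCast b j, ← Real.rpow_natCast (b ^ α) j,
                ← Real.rpow_mul hb0.le, ← Real.rpow_mul hb0.le, mul_comm]
      have hgeom_sum : Summable fun j : ℕ => K * (b ^ α) ^ j := by
        apply Summable.mul_left
        apply summable_geometric_of_lt_one (Real.rpow_nonneg hb0.le _)
        exact Real.rpow_lt_one hb0.le hb1 hα0
      have hsum_ne_top : ∑' j, μ (sset j) ≠ ⊤ := by
        have h1 : ∀ j, μ (sset j) ≤ ENNReal.ofReal (K * (b ^ α) ^ j) := by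
          intro j
          rw [← ENNReal.ofReal_toReal (measure_ne_top μ (sset j))]
          exact ENNReal.ofReal_le_ofReal (hjbound j)
        refine ne_top_of_le_ne_top ?_ (ENNReal.tsum_le_tsum h1)
        rw [← ENNReal.ofReal_tsum_of_nonneg (fun j => by positivity) hgeom_sum]
        exact ENNReal.ofReal_ne_top
      have hBC : μ (limsup sset atTop) = 0 := measure_limsup_atTop_eq_zero hsum_ne_top
      have hae : ∀ᵐ ω ∂μ, ω ∉ limsup sset atTop := by
        rw [← measure_eq_zero_iff_ae_notMem] at *
        exact hBC
      filter_upwards [hae] with ω hω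
      have hev : ∀ᶠ j in atTop, ω ∉ sset j := by
        rw [Filter.mem_limsup_iff_frequently_mem] at hω
        exact Filter.not_frequently.mp hω
      apply Summable.of_norm_bounded_eventually_nat (g := fun j => C * b ^ j)
        ((summable_geometric_of_lt_one hb0.le hb1).mul_left C)
      filter_upwards [hev] with j hj
      have hjlt : ‖Z j ω‖ < (b⁻¹) ^ j := by
        by_contra hcon
        exact hj (by simpa [hsset_def] using le_of_not_gt hcon)
      calc ‖mApp (P ^ j) (Z j ω)‖ ≤ C * r ^ j * ‖Z j ω‖ := hgeo j _
        _ ≤ C * r ^ j * ((b⁻¹) ^ j) := by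
            apply mul_le_mul_of_nonneg_left hjlt.le
            positivity
        _ = C * b ^ j := by
            have hrb : r * b⁻¹ = b := by
              rw [← hbr]; field_simp
            calc C * r ^ j * (b⁻¹) ^ j = C * ((r * b⁻¹) ^ j) := by rw [mul_pow]; ring
              _ = C * b ^ j := by rw [hrb]
  refine ⟨hsum, fun θ => ?_⟩
  -- Second conjunct
  set v : ℕ → EuclideanSpace ℝ (Fin d) := fun j => mApp (P ^ j)ᵀ θ with hv_def
  have hvb : ∀ (j : ℕ) (x : EuclideanSpace ℝ (Fin d)), ‖x‖ = 1 →
      |⟪v j, x⟫| ≤ (‖θ‖ * C) * r ^ j := by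
    intro j x hx
    rw [hv_def]
    simp only
    rw [inner_mApp_transpose]
    calc |⟪θ, mApp (P ^ j) x⟫| ≤ ‖θ‖ * ‖mApp (P ^ j) x‖ := abs_real_inner_le_norm _ _
      _ ≤ ‖θ‖ * (C * r ^ j * ‖x‖) := by
          apply mul_le_mul_of_nonneg_left (hgeo j x) (norm_nonneg θ)
      _ = (‖θ‖ * C) * r ^ j := by rw [hx]; ring
  have hcb : ∀ j, cc (v j) ≤ ((‖θ‖ * C) ^ α * (Pi0 Set.univ).toReal) * (r ^ α) ^ j := by
    intro j
    have h := hcc_bound (v j) ((‖θ‖ * C) * r ^ j) (by positivity) (hvb j)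
    calc cc (v j) ≤ ((‖θ‖ * C) * r ^ j) ^ α * (Pi0 Set.univ).toReal := h
      _ = ((‖θ‖ * C) ^ α * (Pi0 Set.univ).toReal) * (r ^ α) ^ j := by
          rw [Real.mul_rpow (by positivity) (by positivity)]
          rw [← Real.rpow_natCast r j, ← Real.rpow_natCast (r ^ α) j,
            ← Real.rpow_mul hr0.le, ← Real.rpow_mul hr0.le, mul_comm α (j:ℝ)]
          ring
  have hgeom : Summable fun j : ℕ => ((‖θ‖ * C) ^ α * (Pi0 Set.univ).toReal) * (r ^ α) ^ j := by
    apply Summable.mul_left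
    apply summable_geometric_of_lt_one (Real.rpow_nonneg hr0.le _)
    exact Real.rpow_lt_one hr0.le hr1 hα0
  have hcsum : Summable fun j => cc (v j) :=
    Summable.of_nonneg_of_le (fun j => hcc_nonneg _) hcb hgeom
  set f : ℕ → Ω → ℂ := fun j ω => Complex.exp (Complex.I * (⟪v j, Z j ω⟫ : ℝ)) with hf_def
  have hfmeas : ∀ j, Measurable (f j) := fun j => (measurable_cexp_inner (v j)).comp (hmeas j)
  have hfnorm : ∀ j ω, ‖f j ω‖ = 1 := fun j ω => norm_cexp_I_mul _
  have hfind : iIndepFun f μ :=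
    hindep.comp _ (fun j => measurable_cexp_inner (v j))
  have hstepint : ∀ n : ℕ,
      ∫ ω, Complex.exp (Complex.I *
          ((⟪θ, ∑ j ∈ Finset.range n, mApp (P ^ j) (Z j ω)⟫ : ℝ) : ℂ)) ∂μ =
        Complex.exp (-((∑ j ∈ Finset.range n, cc (v j) : ℝ) : ℂ)) := by
    intro n
    have hrw : ∀ ω, Complex.exp (Complex.I *
        ((⟪θ, ∑ j ∈ Finset.range n, mApp (P ^ j) (Z j ω)⟫ : ℝ) : ℂ)) =
        ∏ j ∈ Finset.range n, f j ω := by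
      intro ω
      have h1 : ⟪θ, ∑ j ∈ Finset.range n, mApp (P ^ j) (Z j ω)⟫ =
          ∑ j ∈ Finset.range n, ⟪v j, Z j ω⟫ := by
        rw [inner_sum]
        exact Finset.sum_congr rfl fun j _ => (inner_mApp_transpose (P ^ j) θ (Z j ω)).symm
      rw [h1]
      push_cast
      rw [Finset.mul_sum, Complex.exp_sum]
    rw [integral_congr_ae (ae_of_all _ hrw)]
    rw [integral_prod_range hfind hfmeas (fun j ω => (hfnorm j ω).le) n]
    have h2 : ∀ j ∈ Finset.range n, ∫ ω, f j ω ∂μ = Complex.exp (-(cc (v j) : ℂ)) :=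
      fun j _ => hcharZ j (v j)
    rw [Finset.prod_congr rfl h2, ← Complex.exp_sum]
    congr 1
    push_cast
    rw [Finset.sum_neg_distrib]
  -- limit of LHS
  have hZsum_meas : ∀ n : ℕ, Measurable fun ω => ∑ j ∈ Finset.range n, mApp (P ^ j) (Z j ω) := by
    intro n
    apply Finset.measurable_sum
    intro j _
    exact ((Matrix.toEuclideanCLM (𝕜 := ℝ) (P ^ j)).continuous.measurable).comp (hmeas j)
  have hlim1 : Tendsto
      (fun n => ∫ ω, Complex.exp (Complex.I *
        ((⟪θ, ∑ j ∈ Finset.range n, mApp (P ^ j) (Z j ω)⟫ : ℝ) : ℂ)) ∂μ) atTop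
      (𝓝 (∫ ω, Complex.exp (Complex.I *
        ((⟪θ, ∑' j : ℕ, mApp (P ^ j) (Z j ω)⟫ : ℝ) : ℂ)) ∂μ)) := by
    apply tendsto_integral_of_dominated_convergence (bound := fun _ => 1)
    · intro n
      exact ((measurable_cexp_inner θ).comp (hZsum_meas n)).aestronglyMeasurable
    · exact integrable_const 1
    · intro n
      exact ae_of_all _ fun ω => (norm_cexp_I_mul _).le
    · filter_upwards [hsum] with ω hω
      have h1 : Tendsto (fun n => ∑ j ∈ Finset.range n, mApp (P ^ j) (Z j ω)) atTop
          (𝓝 (∑' j : ℕ, mApp (P ^ j) (Z j ω))) := hω.hasSum.tendsto_sum_nat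
      have hcont : Continuous fun y : EuclideanSpace ℝ (Fin d) =>
          Complex.exp (Complex.I * ((⟪θ, y⟫ : ℝ) : ℂ)) :=
        Complex.continuous_exp.comp (continuous_const.mul
          (Complex.continuous_ofReal.comp (continuous_const.inner continuous_id)))
      exact ((hcont.tendsto _).comp h1)
  -- limit of RHS
  have hlim2 : Tendsto (fun n => Complex.exp (-((∑ j ∈ Finset.range n, cc (v j) : ℝ) : ℂ)))
      atTop (𝓝 (Complex.exp (-((∑' j : ℕ, cc (v j) : ℝ) : ℂ)))) := by
    have h1 : Tendsto (fun n => ∑ j ∈ Finset.range n, cc (v j)) atTop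
        (𝓝 (∑' j : ℕ, cc (v j))) := hcsum.hasSum.tendsto_sum_nat
    have hcont : Continuous fun s : ℝ => Complex.exp (-(s : ℂ)) :=
      Complex.continuous_exp.comp (Complex.continuous_ofReal.neg)
    exact (hcont.tendsto _).comp h1
  have hrwlim : (fun n => ∫ ω, Complex.exp (Complex.I *
        ((⟪θ, ∑ j ∈ Finset.range n, mApp (P ^ j) (Z j ω)⟫ : ℝ) : ℂ)) ∂μ) =
      fun n => Complex.exp (-((∑ j ∈ Finset.range n, cc (v j) : ℝ) : ℂ)) :=
    funext hstepint
  rw [hrwlim] at hlim1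
  have hkey := tendsto_nhds_unique hlim1 hlim2
  -- exchange sum and integral on the RHS
  have hswap : ∫ x, ∑' j : ℕ, |⟪v j, x⟫| ^ α ∂Pi0 = ∑' j : ℕ, cc (v j) := by
    symm
    apply integral_tsum_of_summable_integral_norm (fun j => hccint (v j))
    apply Summable.of_nonneg_of_le (fun j => integral_nonneg fun x => norm_nonneg _) _ hgeom
    intro j
    have : ∀ x : EuclideanSpace ℝ (Fin d), ‖(|⟪v j, x⟫| ^ α)‖ = |⟪v j, x⟫| ^ α := fun x => by
      rw [Real.norm_eq_abs, abs_of_nonneg (Real.rpow_nonneg (abs_nonneg _) _)]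
    calc ∫ x, ‖(|⟪v j, x⟫| ^ α)‖ ∂Pi0 = ∫ x, |⟪v j, x⟫| ^ α ∂Pi0 :=
          integral_congr_ae (ae_of_all _ this)
      _ ≤ ((‖θ‖ * C) ^ α * (Pi0 Set.univ).toReal) * (r ^ α) ^ j := hcb j
  rw [hkey]
  congr 2
  exact Complex.ofReal_inj.mpr hswap.symm
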